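/- The 8×8 matrix P1625 with rows (0,-1,-1,-1,-1,1,-1,-1), (-1,0,-1,1,1,1,-1,1), (-1,-1,0,-1,-1,-1,-1,1), (-1,1,-1,0,-1,1,1,1), (-1,1,-1,-1,0,-1,-1,-1), (1,1,-1,1,-1,0,-1,1), (-1,-1,-1,1,-1,-1,0,-1), (-1,1,1,1,-1,1,-1,0) has determinant 1625 = 13·5³. -/

import Mathlib

def P1625 : Matrix (Fin 8) (Fin 8) ℤ :=
  !![0,-1,-1,-1,-1,1,-1,-1;
     -1,0,-1,1,1,1,-1,1;
     -1,-1,0,-1,-1,-1,-1,1;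
     -1,1,-1,0,-1,1,1,1;
     -1,1,-1,-1,0,-1,-1,-1;
     1,1,-1,1,-1,0,-1,1;
     -1,-1,-1,1,-1,-1,0,-1;
     -1,1,1,1,-1,1,-1,0]

private def Eaux : Matrix (Fin 8) (Fin 8) ℤ :=
  !![1,1,0,0,0,0,0,0;
     0,1,0,0,0,0,0,0;
     0,0,1,0,0,0,0,0;
     0,0,0,1,0,0,0,0;
     0,0,0,0,1,0,0,0;
     0,0,0,0,0,1,0,0;
     0,0,0,0,0,0,1,0;
     0,0,0,0,0,0,0,1]

private def P2aux : Matrix (Fin 8) (Fin 8) ℤ :=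
  !![-1,-1,-2,0,0,2,-2,0;
     -1,0,-1,1,1,1,-1,1;
     -1,-1,0,-1,-1,-1,-1,1;
     -1,1,-1,0,-1,1,1,1;
     -1,1,-1,-1,0,-1,-1,-1;
     1,1,-1,1,-1,0,-1,1;
     -1,-1,-1,1,-1,-1,0,-1;
     -1,1,1,1,-1,1,-1,0]

private def Vaux : Matrix (Fin 8) (Fin 8) ℤ :=
  !![1,-1,-1,1,-1,-3,1,9;
     0,1,-1,-3,3,1,-3,-7;
     0,0,1,1,-1,5,-5,-17;
     0,0,0,2,-7,-5,1,-7;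
     0,0,0,0,5,3,1,9;
     0,0,0,0,0,4,-3,-7;
     0,0,0,0,0,0,3,9;
     0,0,0,0,0,0,0,6]

private def Taux : Matrix (Fin 8) (Fin 8) ℤ :=
  !![-1,0,0,0,0,0,0,0;
     -1,1,0,0,0,0,0,0;
     -1,0,2,0,0,0,0,0;
     -1,2,-1,-5,0,0,0,0;
     -1,2,-1,-7,12,0,0,0;
     1,0,-3,-1,-9,-15,0,0;
     -1,0,1,3,-13,-15,10,0;
     -1,2,1,-1,-9,5,-15,-65]

private lemma hE : Eaux * P1625 = P2aux := by decide

private lemma hmul : P2aux * Vaux = Taux := by decide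

private lemma hEdet : Eaux.det = 1 := by
  have he : ∀ i j : Fin 8, (id j : Fin 8) < id i → Eaux i j = 0 := by
    intro i j h; change j < i at h; fin_cases i <;> fin_cases j <;> simp_all [Eaux]
  rw [Matrix.det_of_upperTriangular (fun i j h => he i j h)]
  simp [Eaux, Fin.prod_univ_succ]

private lemma hV : Vaux.det = 720 := by
  have hv : ∀ i j : Fin 8, (id j : Fin 8) < id i → Vaux i j = 0 := by
    intro i j h; change j < i at h; fin_cases i <;> fin_cases j <;> simp_all [Vaux]
  rw [Matrix.det_of_upperTriangular (fun i j h => hv i j h)]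
  simp [Vaux, Fin.prod_univ_succ]

private lemma hT : Taux.det = 1170000 := by
  have ht : ∀ i j : Fin 8, (OrderDual.toDual j) < OrderDual.toDual i → Taux i j = 0 := by
    intro i j h; change i < j at h; fin_cases i <;> fin_cases j <;> simp_all [Taux]
  rw [Matrix.det_of_lowerTriangular Taux (fun i j h => ht i j h)]
  simp [Taux, Fin.prod_univ_succ]

theorem P1625_det : P1625.det = 1625 ∧ (1625 : ℤ) = 13 * 5 ^ 3 := by
  refine ⟨?_, by norm_num⟩
  have h1 : Eaux.det * P1625.det = P2aux.det :=
    (Matrix.det_mul Eaux P1625).symm.trans (congrArg Matrix.det hE)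
  have h2 : P2aux.det * Vaux.det = Taux.det :=
    (Matrix.det_mul P2aux Vaux).symm.trans (congrArg Matrix.det hmul)
  rw [hEdet, one_mul] at h1
  rw [← h1, hV, hT] at h2
  omega
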